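/- With notation as in the piecewise-constant efficiency model, if for some j ∈ {1,…,m} the switching time p_j is replaced by p_j' with p_{j-1} < p_j < p_j' < p_{j+1}, then ρ(Φ(E, P̃_j)) < ρ(Φ(E,P)), i.e., lengthening the interval on which the higher efficiency e_j acts strictly decreases the spectral radius. -/

import Mathlib

open Matrix

/-- The matrix exponential over the reals. -/
noncomputable def mexp {n : ℕ} (A : Matrix (Fin n) (Fin n) ℝ) : Matrix (Fin n) (Fin n) ℝ :=
  NormedSpace.exp A

/-- Spectral radius of a real matrix: largest modulus of its (complex) eigenvalues. -/
noncomputable def specRad {n : ℕ} (A : Matrix (Fin n) (Fin n) ℝ) : ENNReal :=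
  spectralRadius ℂ (A.map (Complex.ofReal))

/-- The matrix `A(e)` of the within-host HIV model with RT-inhibitor efficiency `e`. -/
noncomputable def Amat (β γ k T₀ N : ℝ) (e : ℝ) : Matrix (Fin 2) (Fin 2) ℝ :=
  !![-β, k * (1 - e) * T₀; N * β, -γ]

/-- The monodromy matrix `Φ(e,p)` for bang-bang periodic treatment. -/
noncomputable def Phi (β γ k T₀ N τ : ℝ) (e p : ℝ) : Matrix (Fin 2) (Fin 2) ℝ :=
  mexp ((τ - p) • Amat β γ k T₀ N 0) * mexp (p • Amat β γ k T₀ N e)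

/-- The monodromy matrix for a general piecewise-constant periodic efficiency:
`Φ(E,P) = e^{(p_{m+1}-p_m)A(e_{m+1})} ⋯ e^{(p₁-p₀)A(e₁)}`, where the efficiency takes the
value `e i` on the interval `[p i.castSucc, p i.succ)`. -/
noncomputable def PhiPC (β γ k T₀ N : ℝ) (m : ℕ) (e : Fin (m + 1) → ℝ)
    (p : Fin (m + 2) → ℝ) : Matrix (Fin 2) (Fin 2) ℝ :=
  (((List.finRange (m + 1)).map fun i =>
      mexp ((p i.succ - p i.castSucc) • Amat β γ k T₀ N (e i))).reverse).prod

namespace SRaux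

abbrev M2 := Matrix (Fin 2) (Fin 2) ℝ

noncomputable def entryCLM (i j : Fin 2) : M2 →L[ℝ] ℝ :=
  LinearMap.toContinuousLinearMap
    { toFun := fun M => M i j
      map_add' := fun _ _ => rfl
      map_smul' := fun _ _ => rfl }

theorem exp_entry_hasSum (A : M2) (i j : Fin 2) :
    HasSum (fun n : ℕ => ((n.factorial : ℝ))⁻¹ * ((A ^ n) i j)) (NormedSpace.exp A i j) := by
  letI : SeminormedRing M2 := Matrix.linftyOpSemiNormedRing
  letI : NormedRing M2 := Matrix.linftyOpNormedRing
  letI : NormedAlgebra ℝ M2 := Matrix.linftyOpNormedAlgebra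
  have h := NormedSpace.exp_series_hasSum_exp' (𝕂 := ℝ) A
  have h2 := (entryCLM i j).hasSum h
  exact h2

def EntryNN (M : M2) : Prop := ∀ i j, 0 ≤ M i j
def EntryLE (A B : M2) : Prop := ∀ i j, A i j ≤ B i j
def Metzler (M : M2) : Prop := 0 ≤ M 0 1 ∧ 0 ≤ M 1 0
def PosDiag (M : M2) : Prop := EntryNN M ∧ 0 < M 0 0 ∧ 0 < M 1 1
def PosAll (M : M2) : Prop := ∀ i j, 0 < M i j

theorem fin2_cases (i : Fin 2) : i = 0 ∨ i = 1 := by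
  fin_cases i
  · left; rfl
  · right; rfl

theorem pow_entry_nonneg {A : M2} (hA : EntryNN A) (n : ℕ) : EntryNN (A ^ n) := by
  induction n with
  | zero => intro i j; rw [pow_zero]; rcases eq_or_ne i j with h | h <;>
      simp [Matrix.one_apply, h]
  | succ n ih =>
    intro i j
    rw [pow_succ, Matrix.mul_apply]
    exact Finset.sum_nonneg fun c _ => mul_nonneg (ih i c) (hA c j)

theorem pow_entry_mono {A B : M2} (hA : EntryNN A) (h : EntryLE A B) (n : ℕ) :
    EntryLE (A ^ n) (B ^ n) := by
  have hB : EntryNN B := fun i j => le_trans (hA i j) (h i j)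
  induction n with
  | zero => intro i j; rw [pow_zero, pow_zero]
  | succ n ih =>
    intro i j
    rw [pow_succ, pow_succ, Matrix.mul_apply, Matrix.mul_apply]
    refine Finset.sum_le_sum fun c _ => mul_le_mul (ih i c) (h c j) (hA c j)
      (pow_entry_nonneg hB n i c)

theorem exp_entry_le {A B : M2} (hA : EntryNN A) (h : EntryLE A B) (i j : Fin 2) :
    NormedSpace.exp A i j ≤ NormedSpace.exp B i j :=
  hasSum_le (fun n => mul_le_mul_of_nonneg_left (pow_entry_mono hA h n i j)
    (by positivity)) (exp_entry_hasSum A i j) (exp_entry_hasSum B i j)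

theorem exp_entry_lt {A B : M2} (hA : EntryNN A) (h : EntryLE A B) (i j : Fin 2)
    (hij : A i j < B i j) :
    NormedSpace.exp A i j < NormedSpace.exp B i j := by
  refine hasSum_lt (i := 1) (fun n => mul_le_mul_of_nonneg_left (pow_entry_mono hA h n i j)
    (by positivity)) ?_ (exp_entry_hasSum A i j) (exp_entry_hasSum B i j)
  simpa [pow_one] using hij

theorem exp_entry_ge {A : M2} (hA : EntryNN A) (i j : Fin 2) :
    (1 : M2) i j + A i j ≤ NormedSpace.exp A i j := by
  have := sum_le_hasSum ({0, 1} : Finset ℕ)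
    (fun n _ => mul_nonneg (by positivity) (pow_entry_nonneg hA n i j))
    (exp_entry_hasSum A i j)
  simpa [pow_one] using this

theorem exp_smul_one (c : ℝ) :
    NormedSpace.exp (c • (1 : M2)) = Real.exp c • (1 : M2) := by
  letI : SeminormedRing M2 := Matrix.linftyOpSemiNormedRing
  letI : NormedRing M2 := Matrix.linftyOpNormedRing
  letI : NormedAlgebra ℝ M2 := Matrix.linftyOpNormedAlgebra
  rw [NormedSpace.exp_eq_tsum (𝕂 := ℝ)]
  simp_rw [smul_pow, one_pow, smul_smul]
  rw [Summable.tsum_smul_const ?_]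
  · congr 1
    have h1 : Real.exp c = NormedSpace.exp c := congrFun Real.exp_eq_exp_ℝ c
    rw [h1, NormedSpace.exp_eq_tsum (𝕂 := ℝ)]
    simp [smul_eq_mul]
  · have := NormedSpace.expSeries_summable' (𝕂 := ℝ) (𝔸 := ℝ) c
    simpa [smul_eq_mul] using this

theorem exp_shift (A : M2) (c : ℝ) :
    NormedSpace.exp A = Real.exp (-c) • NormedSpace.exp (A + c • 1) := by
  have hA : A = (A + c • 1) + (-c) • 1 := by
    rw [add_assoc, ← add_smul]
    simp
  have hcomm : Commute (A + c • (1 : M2)) ((-c) • (1 : M2)) :=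
    (Commute.one_right _).smul_right _
  conv_lhs => rw [hA]
  rw [Matrix.exp_add_of_commute _ _ hcomm, exp_smul_one, mul_smul_comm, mul_one]

theorem metzler_shift {A : M2} (hA : Metzler A) {c : ℝ} (h0 : -A 0 0 ≤ c) (h1 : -A 1 1 ≤ c) :
    EntryNN (A + c • 1) := by
  intro i j
  fin_cases i <;> fin_cases j <;>
    simp [Matrix.add_apply, Matrix.smul_apply, Matrix.one_apply] <;>
    [linarith; exact hA.1; exact hA.2; linarith]

theorem entryNN_one_add {A : M2} (hA : EntryNN A) (i j : Fin 2) :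
    0 ≤ (1 : M2) i j + A i j := by
  refine add_nonneg ?_ (hA i j)
  rcases eq_or_ne i j with h | h <;> simp [Matrix.one_apply, h]

theorem exp_metzler_nonneg {A : M2} (hA : Metzler A) : EntryNN (NormedSpace.exp A) := by
  intro i j
  set c := |A 0 0| + |A 1 1| with hc
  have hNN : EntryNN (A + c • 1) :=
    metzler_shift hA (by cases abs_cases (A 0 0) <;> cases abs_cases (A 1 1) <;> linarith)
      (by cases abs_cases (A 0 0) <;> cases abs_cases (A 1 1) <;> linarith)
  rw [exp_shift A c]
  rw [Matrix.smul_apply]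
  exact mul_nonneg (Real.exp_nonneg _)
    (le_trans (entryNN_one_add hNN i j) (exp_entry_ge hNN i j))

theorem exp_metzler_diag_pos {A : M2} (hA : Metzler A) (i : Fin 2) :
    0 < NormedSpace.exp A i i := by
  set c := |A 0 0| + |A 1 1| with hc
  have hNN : EntryNN (A + c • 1) :=
    metzler_shift hA (by cases abs_cases (A 0 0) <;> cases abs_cases (A 1 1) <;> linarith)
      (by cases abs_cases (A 0 0) <;> cases abs_cases (A 1 1) <;> linarith)
  rw [exp_shift A c, Matrix.smul_apply]
  refine mul_pos (Real.exp_pos _) (lt_of_lt_of_le ?_ (exp_entry_ge hNN i i))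
  have h1 : (1 : M2) i i = 1 := Matrix.one_apply_eq i
  have := hNN i i
  linarith

theorem exp_metzler_offdiag_pos {A : M2} (hA : Metzler A) (i j : Fin 2) (hne : i ≠ j)
    (hpos : 0 < A i j) : 0 < NormedSpace.exp A i j := by
  set c := |A 0 0| + |A 1 1| with hc
  have hNN : EntryNN (A + c • 1) :=
    metzler_shift hA (by cases abs_cases (A 0 0) <;> cases abs_cases (A 1 1) <;> linarith)
      (by cases abs_cases (A 0 0) <;> cases abs_cases (A 1 1) <;> linarith)
  rw [exp_shift A c, Matrix.smul_apply]
  refine mul_pos (Real.exp_pos _) (lt_of_lt_of_le ?_ (exp_entry_ge hNN i j))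
  have h1 : (1 : M2) i j = 0 := Matrix.one_apply_ne hne
  have h2 : (A + c • 1) i j = A i j := by
    simp [Matrix.add_apply, Matrix.smul_apply, Matrix.one_apply_ne hne]
  rw [h1, h2]
  linarith

theorem negle (x y z w : ℝ) : -x ≤ |x| + |y| + |z| + |w| := by
  have := neg_abs_le x; have := abs_nonneg y; have := abs_nonneg z; have := abs_nonneg w
  linarith

theorem exp_metzler_le {A B : M2} (hA : Metzler A) (h : EntryLE A B) (i j : Fin 2) :
    NormedSpace.exp A i j ≤ NormedSpace.exp B i j := by
  set c := |A 0 0| + |A 1 1| + |B 0 0| + |B 1 1| with hc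
  have hNNA : EntryNN (A + c • 1) := metzler_shift hA
    (by have := negle (A 0 0) (A 1 1) (B 0 0) (B 1 1); linarith)
    (by have := negle (A 1 1) (A 0 0) (B 0 0) (B 1 1); linarith)
  have hle : EntryLE (A + c • 1) (B + c • 1) := fun a b => by
    simpa [Matrix.add_apply] using add_le_add_right (h a b) ((c • (1 : M2)) a b)
  rw [exp_shift A c, exp_shift B c, Matrix.smul_apply, Matrix.smul_apply]
  exact mul_le_mul_of_nonneg_left (exp_entry_le hNNA hle i j) (Real.exp_nonneg _)

theorem exp_metzler_lt {A B : M2} (hA : Metzler A) (h : EntryLE A B) (i j : Fin 2)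
    (hij : A i j < B i j) :
    NormedSpace.exp A i j < NormedSpace.exp B i j := by
  set c := |A 0 0| + |A 1 1| + |B 0 0| + |B 1 1| with hc
  have hNNA : EntryNN (A + c • 1) := metzler_shift hA
    (by have := negle (A 0 0) (A 1 1) (B 0 0) (B 1 1); linarith)
    (by have := negle (A 1 1) (A 0 0) (B 0 0) (B 1 1); linarith)
  have hle : EntryLE (A + c • 1) (B + c • 1) := fun a b => by
    simpa [Matrix.add_apply] using add_le_add_right (h a b) ((c • (1 : M2)) a b)
  have hlt : (A + c • 1) i j < (B + c • 1) i j := by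
    simpa [Matrix.add_apply] using add_lt_add_right hij ((c • (1 : M2)) i j)
  rw [exp_shift A c, exp_shift B c, Matrix.smul_apply, Matrix.smul_apply]
  exact mul_lt_mul_of_pos_left (exp_entry_lt hNNA hle i j hlt) (Real.exp_pos _)

theorem posAll_entryNN {M : M2} (h : PosAll M) : EntryNN M := fun i j => (h i j).le

theorem posDiag_one : PosDiag (1 : M2) := by
  refine ⟨fun i j => ?_, ?_, ?_⟩
  · rcases eq_or_ne i j with h | h <;> simp [Matrix.one_apply, h]
  · simp
  · simp

theorem posDiag_mul {M N : M2} (hM : PosDiag M) (hN : PosDiag N) : PosDiag (M * N) := by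
  obtain ⟨hMnn, hM00, hM11⟩ := hM
  obtain ⟨hNnn, hN00, hN11⟩ := hN
  refine ⟨fun i j => ?_, ?_, ?_⟩ <;>
    simp only [Matrix.mul_apply, Fin.sum_univ_two]
  · exact add_nonneg (mul_nonneg (hMnn i 0) (hNnn 0 j)) (mul_nonneg (hMnn i 1) (hNnn 1 j))
  · nlinarith [mul_nonneg (hMnn 0 1) (hNnn 1 0)]
  · nlinarith [mul_nonneg (hMnn 1 0) (hNnn 0 1)]

theorem posDiag_mul_posAll {M N : M2} (hM : PosDiag M) (hN : PosAll N) : PosAll (M * N) := by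
  obtain ⟨hMnn, hM00, hM11⟩ := hM
  intro i j
  simp only [Matrix.mul_apply, Fin.sum_univ_two]
  rcases fin2_cases i with h | h <;> subst h
  · nlinarith [mul_nonneg (hMnn 0 1) (hN 1 j).le, hN 0 j]
  · nlinarith [mul_nonneg (hMnn 1 0) (hN 0 j).le, hN 1 j]

theorem row1_mul {Y L : M2} (hYnn : EntryNN Y) (hY10 : 0 < Y 1 0) (hY11 : 0 < Y 1 1)
    (hL : PosDiag L) :
    EntryNN (Y * L) ∧ 0 < (Y * L) 1 0 ∧ 0 < (Y * L) 1 1 := by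
  obtain ⟨hLnn, hL00, hL11⟩ := hL
  refine ⟨fun i j => ?_, ?_, ?_⟩ <;> simp only [Matrix.mul_apply, Fin.sum_univ_two]
  · exact add_nonneg (mul_nonneg (hYnn i 0) (hLnn 0 j)) (mul_nonneg (hYnn i 1) (hLnn 1 j))
  · nlinarith [mul_nonneg (hYnn 1 1) (hLnn 1 0)]
  · nlinarith [mul_nonneg (hYnn 1 0) (hLnn 0 1)]

theorem sandwich_lt {C M M' D : M2} (hC : PosAll C) (hDnn : EntryNN D)
    (hD10 : 0 < D 1 0) (hD11 : 0 < D 1 1)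
    (hle : EntryLE M M') (h01 : M 0 1 < M' 0 1) (a b : Fin 2) :
    (C * M * D) a b < (C * M' * D) a b := by
  have hD1b : 0 < D 1 b := by rcases fin2_cases b with h | h <;> subst h <;> assumption
  simp only [Matrix.mul_apply, Fin.sum_univ_two]
  nlinarith [mul_nonneg (mul_nonneg (hC a 0).le (sub_nonneg.2 (hle 0 0))) (hDnn 0 b),
    mul_nonneg (mul_nonneg (hC a 1).le (sub_nonneg.2 (hle 1 0))) (hDnn 0 b),
    mul_nonneg (mul_nonneg (hC a 1).le (sub_nonneg.2 (hle 1 1))) (hDnn 1 b),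
    mul_pos (mul_pos (hC a 0) (sub_pos.2 h01)) hD1b]

theorem sandwich_pos {C M D : M2} (hC : PosAll C) (hMnn : EntryNN M) (hM11 : 0 < M 1 1)
    (hDnn : EntryNN D) (hD10 : 0 < D 1 0) (hD11 : 0 < D 1 1) :
    PosAll (C * M * D) := by
  intro a b
  have hD1b : 0 < D 1 b := by rcases fin2_cases b with h | h <;> subst h <;> assumption
  simp only [Matrix.mul_apply, Fin.sum_univ_two]
  nlinarith [mul_pos (mul_pos (hC a 1) hM11) hD1b,
    mul_nonneg (mul_nonneg (hC a 0).le (hMnn 0 0)) (hDnn 0 b),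
    mul_nonneg (mul_nonneg (hC a 0).le (hMnn 0 1)) (hDnn 1 b),
    mul_nonneg (mul_nonneg (hC a 1).le (hMnn 1 0)) (hDnn 0 b)]

theorem list_prod_posDiag (l : List M2) (h : ∀ x ∈ l, PosDiag x) : PosDiag l.prod := by
  induction l with
  | nil => simpa using posDiag_one
  | cons x xs ih =>
    rw [List.prod_cons]
    exact posDiag_mul (h x (List.mem_cons_self))
      (ih fun y hy => h y (List.mem_cons_of_mem x hy))

noncomputable def perron (M : M2) : ℝ :=
  (M 0 0 + M 1 1 + Real.sqrt ((M 0 0 - M 1 1) ^ 2 + 4 * (M 0 1 * M 1 0))) / 2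

theorem perron_facts {M : M2} (hM : PosAll M) :
    M 0 0 < perron M ∧ M 1 1 < perron M ∧
      (perron M - M 0 0) * (perron M - M 1 1) = M 0 1 * M 1 0 := by
  set a := M 0 0; set d := M 1 1; set b := M 0 1; set c := M 1 0
  have hb : 0 < b := hM 0 1
  have hc : 0 < c := hM 1 0
  set s := Real.sqrt ((a - d) ^ 2 + 4 * (b * c)) with hs
  have hsnn : 0 ≤ s := Real.sqrt_nonneg _
  have hs2 : s ^ 2 = (a - d) ^ 2 + 4 * (b * c) :=
    Real.sq_sqrt (by positivity)
  have h1 : a - d < s := by nlinarith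
  have h2 : d - a < s := by nlinarith
  refine ⟨by simp only [perron]; linarith, by simp only [perron]; linarith, ?_⟩
  simp only [perron]
  linear_combination hs2 / 4

theorem perron_mul (M : M2) (hM : PosAll M) :
    perron M * (M 0 0 + M 1 1 - perron M) = M 0 0 * M 1 1 - M 0 1 * M 1 0 := by
  obtain ⟨_, _, h3⟩ := perron_facts hM
  linear_combination -h3

theorem spectrum_eq {M : M2} (hM : PosAll M) :
    spectrum ℂ (M.map (Complex.ofReal)) =
      {(perron M : ℂ), ((M 0 0 + M 1 1 - perron M : ℝ) : ℂ)} := by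
  have hC : ((perron M : ℂ)) * ((M 0 0 + M 1 1 - perron M : ℝ) : ℂ)
      = (M 0 0 : ℂ) * (M 1 1 : ℂ) - (M 0 1 : ℂ) * (M 1 0 : ℂ) := by
    exact_mod_cast congrArg Complex.ofReal (perron_mul M hM)
  ext μ
  rw [spectrum.mem_iff, Matrix.isUnit_iff_isUnit_det, isUnit_iff_ne_zero, not_ne_iff]
  have halg : (algebraMap ℂ (Matrix (Fin 2) (Fin 2) ℂ)) μ = μ • 1 :=
    Algebra.algebraMap_eq_smul_one μ
  rw [halg, Matrix.det_fin_two]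
  have e00 : (μ • (1 : Matrix (Fin 2) (Fin 2) ℂ) - M.map Complex.ofReal) 0 0
      = μ - (M 0 0 : ℂ) := by simp [Matrix.one_apply]
  have e11 : (μ • (1 : Matrix (Fin 2) (Fin 2) ℂ) - M.map Complex.ofReal) 1 1
      = μ - (M 1 1 : ℂ) := by simp [Matrix.one_apply]
  have e01 : (μ • (1 : Matrix (Fin 2) (Fin 2) ℂ) - M.map Complex.ofReal) 0 1
      = -(M 0 1 : ℂ) := by simp [Matrix.one_apply]
  have e10 : (μ • (1 : Matrix (Fin 2) (Fin 2) ℂ) - M.map Complex.ofReal) 1 0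
      = -(M 1 0 : ℂ) := by simp [Matrix.one_apply]
  rw [e00, e11, e01, e10]
  have hfact : (μ - (M 0 0 : ℂ)) * (μ - (M 1 1 : ℂ)) - (-(M 0 1 : ℂ)) * (-(M 1 0 : ℂ))
      = (μ - (perron M : ℂ)) * (μ - ((M 0 0 + M 1 1 - perron M : ℝ) : ℂ)) := by
    push_cast
    push_cast at hC
    linear_combination -hC
  rw [hfact, mul_eq_zero, sub_eq_zero, sub_eq_zero]
  simp [Set.mem_insert_iff]

theorem two_perron (M : M2) : M 0 0 + M 1 1 ≤ 2 * perron M := by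
  simp only [perron]
  linarith [Real.sqrt_nonneg ((M 0 0 - M 1 1) ^ 2 + 4 * (M 0 1 * M 1 0))]

theorem specRad_eq {M : M2} (hM : PosAll M) :
    spectralRadius ℂ (M.map (Complex.ofReal)) = ENNReal.ofReal (perron M) := by
  obtain ⟨h1, h2, _⟩ := perron_facts hM
  have hp : 0 < perron M := lt_trans (hM 0 0) h1
  rw [spectralRadius, spectrum_eq hM, iSup_pair]
  have key : ∀ x : ℝ, ((‖(x : ℂ)‖₊ : ENNReal)) = ENNReal.ofReal |x| := by
    intro x
    rw [← enorm_eq_nnnorm, ← ofReal_norm, Complex.norm_real, Real.norm_eq_abs]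
  rw [key, key]
  have habs1 : |perron M| = perron M := abs_of_pos hp
  have habs2 : |M 0 0 + M 1 1 - perron M| ≤ perron M := by
    rw [abs_le]
    constructor
    · have := hM 0 0; have := hM 1 1; linarith
    · linarith [two_perron M]
  rw [habs1]
  rw [sup_eq_left.2 (ENNReal.ofReal_le_ofReal habs2)]

theorem perron_lt {M N : M2} (hM : PosAll M) (hN : PosAll N) (h : ∀ i j, M i j < N i j) :
    perron M < perron N := by
  obtain ⟨hM1, hM2, hM3⟩ := perron_facts hM
  obtain ⟨hN1, hN2, hN3⟩ := perron_facts hN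
  by_contra hcon
  push_neg at hcon
  have s1 : (perron N - N 0 0) * (perron N - N 1 1)
      ≤ (perron M - N 0 0) * (perron M - N 1 1) := by
    apply mul_le_mul (by linarith) (by linarith) (by linarith) (by linarith)
  have s2 : (perron M - N 0 0) * (perron M - N 1 1)
      < (perron M - M 0 0) * (perron M - M 1 1) := by
    have h00 := h 0 0
    have h11 := h 1 1
    have g1 : 0 ≤ perron M - N 0 0 := by linarith
    have g2 : 0 ≤ perron M - N 1 1 := by linarith
    nlinarith
  have s3 : M 0 1 * M 1 0 < N 0 1 * N 1 0 := by
    have := h 0 1; have := h 1 0; have := hM 0 1; have := hM 1 0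
    nlinarith
  linarith [hM3, hN3, s1, s2, s3]

theorem specRad_lt {M N : M2} (hM : PosAll M) (hN : PosAll N) (h : ∀ i j, M i j < N i j) :
    spectralRadius ℂ (M.map (Complex.ofReal)) < spectralRadius ℂ (N.map (Complex.ofReal)) := by
  rw [specRad_eq hM, specRad_eq hN]
  exact (ENNReal.ofReal_lt_ofReal_iff (lt_trans (hN 0 0) (perron_facts hN).1)).2
    (perron_lt hM hN h)

theorem finRange_split (n a : ℕ) (h2 : a + 1 < n) :
    List.finRange n = (List.finRange n).take a ++ (⟨a, by omega⟩ : Fin n) ::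
      (⟨a + 1, h2⟩ : Fin n) :: (List.finRange n).drop (a + 2) := by
  conv_lhs => rw [← List.take_append_drop a (List.finRange n)]
  congr 1
  have hl : (List.finRange n).length = n := List.length_finRange (n := n)
  have ha : a < (List.finRange n).length := by omega
  have ha2 : a + 1 < (List.finRange n).length := by omega
  rw [List.drop_eq_getElem_cons ha, List.drop_eq_getElem_cons ha2]
  congr 1
  · simp [List.getElem_finRange]
  congr 1
  simp [List.getElem_finRange]

end SRaux

namespace SRaux

@[simp] theorem Amat_00 (β γ k T₀ N x : ℝ) : Amat β γ k T₀ N x 0 0 = -β := by simp [Amat]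
@[simp] theorem Amat_01 (β γ k T₀ N x : ℝ) : Amat β γ k T₀ N x 0 1 = k * (1 - x) * T₀ := by
  simp [Amat]
@[simp] theorem Amat_10 (β γ k T₀ N x : ℝ) : Amat β γ k T₀ N x 1 0 = N * β := by simp [Amat]
@[simp] theorem Amat_11 (β γ k T₀ N x : ℝ) : Amat β γ k T₀ N x 1 1 = -γ := by simp [Amat]

variable {β γ k T₀ N : ℝ}

theorem Asmul_metzler (hβ : 0 < β) (hk : 0 < k) (hT₀ : 0 < T₀) (hN : 0 < N)
    {t x : ℝ} (ht : 0 ≤ t) (hx : x ≤ 1) : Metzler (t • Amat β γ k T₀ N x) := by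
  constructor <;> rw [Matrix.smul_apply] <;> simp only [Amat_01, Amat_10, smul_eq_mul]
  · have : 0 ≤ 1 - x := by linarith
    positivity
  · positivity

theorem factor_posDiag (hβ : 0 < β) (hk : 0 < k) (hT₀ : 0 < T₀) (hN : 0 < N)
    {t x : ℝ} (ht : 0 ≤ t) (hx : x ≤ 1) :
    PosDiag (mexp (t • Amat β γ k T₀ N x)) := by
  have hMet := Asmul_metzler (γ := γ) hβ hk hT₀ hN ht hx
  exact ⟨exp_metzler_nonneg hMet, exp_metzler_diag_pos hMet 0, exp_metzler_diag_pos hMet 1⟩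

theorem factor_10_pos (hβ : 0 < β) (hγ : 0 < γ) (hk : 0 < k) (hT₀ : 0 < T₀) (hN : 0 < N)
    {t x : ℝ} (ht : 0 < t) (hx : x ≤ 1) :
    0 < (mexp (t • Amat β γ k T₀ N x)) 1 0 := by
  have hMet := Asmul_metzler (γ := γ) hβ hk hT₀ hN ht.le hx
  refine exp_metzler_offdiag_pos hMet 1 0 (by decide) ?_
  rw [Matrix.smul_apply, Amat_10, smul_eq_mul]
  positivity

theorem factor_posAll (hβ : 0 < β) (hγ : 0 < γ) (hk : 0 < k) (hT₀ : 0 < T₀) (hN : 0 < N)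
    {t x : ℝ} (ht : 0 < t) (hx : x < 1) :
    PosAll (mexp (t • Amat β γ k T₀ N x)) := by
  have hMet := Asmul_metzler (γ := γ) hβ hk hT₀ hN ht.le hx.le
  intro i j
  rcases fin2_cases i with hi | hi <;> rcases fin2_cases j with hj | hj <;> subst hi <;> subst hj
  · exact exp_metzler_diag_pos hMet 0
  · refine exp_metzler_offdiag_pos hMet 0 1 (by decide) ?_
    rw [Matrix.smul_apply, Amat_01, smul_eq_mul]
    have : 0 < 1 - x := by linarith
    positivity
  · exact factor_10_pos hβ hγ hk hT₀ hN ht hx.le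
  · exact exp_metzler_diag_pos hMet 1

theorem prod_split {n : ℕ} (g : Fin n → M2) (T D : List (Fin n)) (x y : Fin n) :
    (((T ++ x :: y :: D).map g).reverse).prod
      = ((D.map g).reverse).prod * (g y * (g x * ((T.map g).reverse).prod)) := by
  simp [List.prod_append, mul_assoc]

theorem mexp_split (A : M2) (s t : ℝ) :
    mexp ((s + t) • A) = mexp (s • A) * mexp (t • A) := by
  rw [mexp, add_smul]
  exact Matrix.exp_add_of_commute _ _ (((Commute.refl A).smul_left s).smul_right t)

end SRaux

open SRaux in
/-- Lengthening the interval on which the higher efficiency `e_j` acts (replacing the switching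
time `p_j` by a larger `p_j' < p_{j+1}`) strictly decreases the spectral radius of `Φ(E,P)`. -/
theorem specRad_PhiPC_anti_in_p (β γ k T₀ N τ : ℝ) (hβ : 0 < β) (hγ : 0 < γ) (hk : 0 < k)
    (hT₀ : 0 < T₀) (hN : 0 < N) (hτ : 0 < τ) (m : ℕ) (hm : 1 ≤ m)
    (e : Fin (m + 1) → ℝ) (p : Fin (m + 2) → ℝ)
    (hp0 : p 0 = 0) (hpτ : p (Fin.last (m + 1)) = τ) (hpmono : StrictMono p)
    (he1 : e 0 ≤ 1) (heN : 0 ≤ e (Fin.last m)) (heanti : StrictAnti e)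
    (j : Fin (m + 2)) (hj0 : (j : ℕ) ≠ 0) (hjlast : (j : ℕ) ≠ m + 1)
    (p' : ℝ) (hlt : p j < p')
    (hub : ∀ l : Fin (m + 2), (l : ℕ) = (j : ℕ) + 1 → p' < p l) :
    specRad (PhiPC β γ k T₀ N m e (Function.update p j p')) <
      specRad (PhiPC β γ k T₀ N m e p) := by
  classical
  have hj1 : 1 ≤ (j : ℕ) := Nat.one_le_iff_ne_zero.2 hj0
  have hjm : (j : ℕ) ≤ m := by have := j.isLt; omega
  set a : ℕ := (j : ℕ) - 1 with ha
  have hja : (j : ℕ) = a + 1 := by omega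
  have ham : a + 1 < m + 1 := by omega
  set i₁ : Fin (m + 1) := ⟨a, by omega⟩ with hi₁
  set i₂ : Fin (m + 1) := ⟨a + 1, ham⟩ with hi₂
  set q : Fin (m + 2) → ℝ := Function.update p j p' with hqdef
  set f : Fin (m + 1) → M2 :=
    fun i => mexp ((p i.succ - p i.castSucc) • Amat β γ k T₀ N (e i)) with hf
  set f' : Fin (m + 1) → M2 :=
    fun i => mexp ((q i.succ - q i.castSucc) • Amat β γ k T₀ N (e i)) with hf'
  -- special Fin (m+2) points
  have hi1succ : i₁.succ = j := by
    apply Fin.ext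
    simp [Fin.val_succ, hi₁]
    omega
  have hi2cast : i₂.castSucc = j := by
    apply Fin.ext
    simp [Fin.coe_castSucc, hi₂]
    omega
  set jm : Fin (m + 2) := i₁.castSucc with hjm'
  set jp : Fin (m + 2) := i₂.succ with hjp'
  have hjmj : jm ≠ j := by
    intro h
    have := congrArg Fin.val h
    simp [hjm', hi₁] at this
    omega
  have hjpj : jp ≠ j := by
    intro h
    have := congrArg Fin.val h
    simp [hjp', hi₂] at this
    omega
  have hqj : q j = p' := Function.update_self j p' p
  have hqjm : q jm = p jm := Function.update_of_ne hjmj p' p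
  have hqjp : q jp = p jp := Function.update_of_ne hjpj p' p
  -- lengths
  set δ : ℝ := p' - p j with hδdef
  set tX : ℝ := p jp - p' with htXdef
  set tY : ℝ := p j - p jm with htYdef
  have hδ : 0 < δ := by simp [hδdef]; linarith
  have htX : 0 < tX := by
    have := hub jp (by simp [hjp', hi₂, Fin.val_succ]; omega)
    simp [htXdef]; linarith
  have htY : 0 < tY := by
    have : jm < j := by
      rw [← hi1succ]
      exact Fin.castSucc_lt_succ (i := i₁)
    have := hpmono this
    simp [htYdef]; linarith
  -- efficiency bounds
  have heall : ∀ i : Fin (m + 1), e i ≤ 1 :=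
    fun i => le_trans (heanti.antitone (Fin.zero_le i)) he1
  have he2lt1 : e i₂ < 1 := by
    refine lt_of_lt_of_le (heanti ?_) he1
    rw [Fin.lt_def]
    simp [hi₂]
  have he21 : e i₂ < e i₁ := by
    refine heanti ?_
    rw [Fin.lt_def]
    simp [hi₁, hi₂]
  -- matrices
  set A₁ : M2 := Amat β γ k T₀ N (e i₁) with hA₁
  set A₂ : M2 := Amat β γ k T₀ N (e i₂) with hA₂
  set X : M2 := mexp (tX • A₂) with hX
  set Y : M2 := mexp (tY • A₁) with hY
  set E₁ : M2 := mexp (δ • A₁) with hE₁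
  set E₂ : M2 := mexp (δ • A₂) with hE₂
  -- factor identities
  have hfi1 : f i₁ = Y := by
    show mexp ((p i₁.succ - p i₁.castSucc) • Amat β γ k T₀ N (e i₁)) = Y
    rw [hi1succ, ← hjm', ← htYdef, ← hA₁, hY]
  have hfi2 : f i₂ = X * E₂ := by
    show mexp ((p i₂.succ - p i₂.castSucc) • Amat β γ k T₀ N (e i₂)) = X * E₂
    rw [hi2cast, ← hjp']
    have harith : p jp - p j = tX + δ := by rw [htXdef, hδdef]; ring
    rw [harith, ← hA₂, mexp_split, ← hX, ← hE₂]
  have hf'i1 : f' i₁ = E₁ * Y := by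
    show mexp ((q i₁.succ - q i₁.castSucc) • Amat β γ k T₀ N (e i₁)) = E₁ * Y
    rw [hi1succ, hqj, ← hjm', hqjm]
    have harith : p' - p jm = δ + tY := by rw [hδdef, htYdef]; ring
    rw [harith, ← hA₁, mexp_split, ← hE₁, ← hY]
  have hf'i2 : f' i₂ = X := by
    show mexp ((q i₂.succ - q i₂.castSucc) • Amat β γ k T₀ N (e i₂)) = X
    rw [hi2cast, hqj, ← hjp', hqjp, ← htXdef, ← hA₂, hX]
  -- list split
  set T : List (Fin (m + 1)) := (List.finRange (m + 1)).take a with hT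
  set D : List (Fin (m + 1)) := (List.finRange (m + 1)).drop (a + 2) with hD
  have hsplit : List.finRange (m + 1) = T ++ i₁ :: i₂ :: D := by
    rw [hT, hD, hi₁, hi₂]
    exact finRange_split (m + 1) a ham
  -- agreement away from i₁, i₂
  have hagree : ∀ x : Fin (m + 1), x ≠ i₁ → x ≠ i₂ → f' x = f x := by
    intro x hx1 hx2
    have hsucc : x.succ ≠ j := by
      intro h
      apply hx1
      apply Fin.ext
      have := congrArg Fin.val h
      simp [Fin.val_succ] at this
      simp [hi₁]
      omega
    have hcast : x.castSucc ≠ j := by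
      intro h
      apply hx2
      apply Fin.ext
      have := congrArg Fin.val h
      simp [Fin.coe_castSucc] at this
      simp [hi₂]
      omega
    show mexp ((q x.succ - q x.castSucc) • Amat β γ k T₀ N (e x))
      = mexp ((p x.succ - p x.castSucc) • Amat β γ k T₀ N (e x))
    have e1 : q x.succ = p x.succ := Function.update_of_ne hsucc p' p
    have e2 : q x.castSucc = p x.castSucc := Function.update_of_ne hcast p' p
    rw [e1, e2]
  have hnd : (T ++ i₁ :: i₂ :: D).Nodup := by
    rw [← hsplit]; exact List.nodup_finRange (m + 1)
  obtain ⟨hndT, hndR, hdisj⟩ := List.nodup_append.1 hnd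
  have hTx : ∀ x ∈ T, x ≠ i₁ ∧ x ≠ i₂ := by
    intro x hx
    constructor <;> intro h <;> subst h
    · exact hdisj _ hx _ (List.mem_cons_self) rfl
    · exact hdisj _ hx _ (List.mem_cons_of_mem _ (List.mem_cons_self)) rfl
  have hDx : ∀ x ∈ D, x ≠ i₁ ∧ x ≠ i₂ := by
    intro x hx
    have h1 : i₁ ∉ i₂ :: D := (List.nodup_cons.1 hndR).1
    have h2 : i₂ ∉ D := (List.nodup_cons.1 (List.nodup_cons.1 hndR).2).1
    constructor <;> intro h <;> subst h
    · exact h1 (List.mem_cons_of_mem _ hx)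
    · exact h2 hx
  have hmapT : T.map f' = T.map f :=
    List.map_congr_left fun x hx => hagree x (hTx x hx).1 (hTx x hx).2
  have hmapD : D.map f' = D.map f :=
    List.map_congr_left fun x hx => hagree x (hDx x hx).1 (hDx x hx).2
  set R : M2 := ((D.map f).reverse).prod with hR
  set L : M2 := ((T.map f).reverse).prod with hL
  -- product expressions
  have hprodP : PhiPC β γ k T₀ N m e p = (R * X) * E₂ * (Y * L) := by
    show (((List.finRange (m + 1)).map f).reverse).prod = _
    rw [hsplit, prod_split, hfi1, hfi2, ← hR, ← hL]
    simp only [mul_assoc]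
  have hprodQ : PhiPC β γ k T₀ N m e q = (R * X) * E₁ * (Y * L) := by
    show (((List.finRange (m + 1)).map f').reverse).prod = _
    rw [hsplit]
    rw [prod_split, hf'i1, hf'i2, hmapT, hmapD, ← hR, ← hL]
    simp only [mul_assoc]
  -- positivity of the pieces
  have hfpd : ∀ i : Fin (m + 1), PosDiag (f i) := by
    intro i
    refine factor_posDiag hβ hk hT₀ hN ?_ (heall i)
    have := hpmono (Fin.castSucc_lt_succ (i := i))
    linarith
  have hRpd : PosDiag R := by
    refine list_prod_posDiag _ ?_
    intro x hx
    rw [List.mem_reverse] at hx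
    obtain ⟨i, _, rfl⟩ := List.mem_map.1 hx
    exact hfpd i
  have hLpd : PosDiag L := by
    refine list_prod_posDiag _ ?_
    intro x hx
    rw [List.mem_reverse] at hx
    obtain ⟨i, _, rfl⟩ := List.mem_map.1 hx
    exact hfpd i
  have hXall : PosAll X := factor_posAll hβ hγ hk hT₀ hN htX he2lt1
  have hYpd : PosDiag Y := factor_posDiag hβ hk hT₀ hN htY.le (heall i₁)
  have hY10 : 0 < Y 1 0 := factor_10_pos hβ hγ hk hT₀ hN htY (heall i₁)
  have hCall : PosAll (R * X) := posDiag_mul_posAll hRpd hXall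
  obtain ⟨hDnn, hD10, hD11⟩ := row1_mul hYpd.1 hY10 hYpd.2.2 hLpd
  -- Metzler comparison of E₁ and E₂
  have hM1 : Metzler (δ • A₁) := Asmul_metzler hβ hk hT₀ hN hδ.le (heall i₁)
  have hle : EntryLE (δ • A₁) (δ • A₂) := by
    intro i' j'
    rcases fin2_cases i' with h | h <;> rcases fin2_cases j' with h2 | h2 <;>
      subst h <;> subst h2 <;>
      simp only [Matrix.smul_apply, hA₁, hA₂, Amat_00, Amat_01, Amat_10, Amat_11, smul_eq_mul]
    · exact le_rfl
    · nlinarith [mul_pos (mul_pos hδ (mul_pos hk hT₀)) (sub_pos.2 he21)]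
    · exact le_rfl
    · exact le_rfl
  have h01 : (δ • A₁) 0 1 < (δ • A₂) 0 1 := by
    simp only [Matrix.smul_apply, hA₁, hA₂, Amat_01, smul_eq_mul]
    nlinarith [mul_pos (mul_pos hδ (mul_pos hk hT₀)) (sub_pos.2 he21)]
  have hEle : EntryLE E₁ E₂ := fun i' j' => exp_metzler_le hM1 hle i' j'
  have hE01 : E₁ 0 1 < E₂ 0 1 := exp_metzler_lt hM1 hle 0 1 h01
  have hE₁nn : EntryNN E₁ := exp_metzler_nonneg hM1
  have hE₁11 : 0 < E₁ 1 1 := exp_metzler_diag_pos hM1 1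
  have hE₂nn : EntryNN E₂ :=
    exp_metzler_nonneg (Asmul_metzler hβ hk hT₀ hN hδ.le (heall i₂))
  have hE₂11 : 0 < E₂ 1 1 :=
    exp_metzler_diag_pos (Asmul_metzler hβ hk hT₀ hN hδ.le (heall i₂)) 1
  -- conclude
  have hNewAll : PosAll ((R * X) * E₁ * (Y * L)) :=
    sandwich_pos hCall hE₁nn hE₁11 hDnn hD10 hD11
  have hOldAll : PosAll ((R * X) * E₂ * (Y * L)) :=
    sandwich_pos hCall hE₂nn hE₂11 hDnn hD10 hD11
  have hltE : ∀ a' b' : Fin 2, ((R * X) * E₁ * (Y * L)) a' b' < ((R * X) * E₂ * (Y * L)) a' b' :=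
    sandwich_lt hCall hDnn hD10 hD11 hEle hE01
  rw [show specRad (PhiPC β γ k T₀ N m e q) =
      spectralRadius ℂ ((PhiPC β γ k T₀ N m e q).map Complex.ofReal) from rfl,
    show specRad (PhiPC β γ k T₀ N m e p) =
      spectralRadius ℂ ((PhiPC β γ k T₀ N m e p).map Complex.ofReal) from rfl,
    hprodP, hprodQ]
  exact specRad_lt hNewAll hOldAll hltE
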